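/- Let A be an irreducible N×N max-plus matrix and write G = G(A). Define B_ms(G) = 2·cd(G) + ep(G) + max_{H a critical component of G} c(H) + max_{H a critical component of G} ep(H) − 1, and define μ(A) = sup{ A^{⊗n}_{i,k} − A^{⊗n}_{i,j} : i, j, k nodes of G, n ≥ B_ms(G), A^{⊗n}_{i,j} ≠ −∞ }. Then μ(A) ≤ (Δ(G) − ρ(G))·cd(G) + (ρ(G) − δ(G))·(2·cd(G) + ep(G) + max_{H a critical component of G} c(H) − 1). -/

import Mathlib

namespace Transients

variable {V : Type*}

/-- A walk of length `n` in the graph with edge relation `E`, given by its node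
sequence `p 0, p 1, …, p n`. -/
def IsWalk (E : V → V → Prop) (n : ℕ) (p : ℕ → V) : Prop :=
  ∀ k, k < n → E (p k) (p (k + 1))

/-- A closed walk: start node equals end node. -/
def IsClosedWalk (E : V → V → Prop) (n : ℕ) (p : ℕ → V) : Prop :=
  IsWalk E n p ∧ p 0 = p n

/-- A nonempty elementary closed walk: closed, and no node repeats except start = end. -/
def IsElemClosedWalk (E : V → V → Prop) (n : ℕ) (p : ℕ → V) : Prop :=
  0 < n ∧ IsClosedWalk E n p ∧ ∀ k l, k < n → l < n → p k = p l → k = l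

/-- A simple walk: no node is visited twice. -/
def IsSimpleWalk (E : V → V → Prop) (n : ℕ) (p : ℕ → V) : Prop :=
  IsWalk E n p ∧ ∀ k l, k ≤ n → l ≤ n → p k = p l → k = l

def StronglyConnected (E : V → V → Prop) : Prop :=
  ∀ i j : V, ∃ n p, IsWalk E n p ∧ p 0 = i ∧ p n = j

def NontrivialGraph (E : V → V → Prop) : Prop := ∃ i j, E i j

/-- The weight `w_*` of a walk in an edge-weighted graph. -/
noncomputable def walkWeight (w : V → V → ℝ) (n : ℕ) (p : ℕ → V) : ℝ :=
  ∑ k ∈ Finset.range n, w (p k) (p (k + 1))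

/-- The rate ρ(G): supremum of `w_*(γ)/ℓ(γ)` over nonempty closed walks γ. -/
noncomputable def rate (E : V → V → Prop) (w : V → V → ℝ) : ℝ :=
  sSup {x : ℝ | ∃ n p, 0 < n ∧ IsClosedWalk E n p ∧ x = walkWeight w n p / n}

/-- A critical closed walk: nonempty, closed, and its weight is ρ(G) times its length. -/
def IsCriticalWalk (E : V → V → Prop) (w : V → V → ℝ) (n : ℕ) (p : ℕ → V) : Prop :=
  0 < n ∧ IsClosedWalk E n p ∧ walkWeight w n p = rate E w * n

/-- A critical node: lies on some critical closed walk. -/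
def CriticalNode (E : V → V → Prop) (w : V → V → ℝ) (i : V) : Prop :=
  ∃ n p k, IsCriticalWalk E w n p ∧ k ≤ n ∧ p k = i

/-- A critical edge: lies on some critical closed walk. -/
def CriticalEdge (E : V → V → Prop) (w : V → V → ℝ) (i j : V) : Prop :=
  ∃ n p k, IsCriticalWalk E w n p ∧ k < n ∧ p k = i ∧ p (k + 1) = j

/-- The non-critical rate ρ_nc(G): supremum of mean weights of nonempty closed walks
containing no critical node. -/
noncomputable def ncRate (E : V → V → Prop) (w : V → V → ℝ) : ℝ :=
  sSup {x : ℝ | ∃ n p, 0 < n ∧ IsClosedWalk E n p ∧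
    (∀ k, k ≤ n → ¬ CriticalNode E w (p k)) ∧ x = walkWeight w n p / n}

/-- Δ(G), the maximum edge weight. -/
noncomputable def maxWeight (E : V → V → Prop) (w : V → V → ℝ) : ℝ :=
  sSup {x : ℝ | ∃ i j, E i j ∧ x = w i j}

/-- δ(G), the minimum edge weight. -/
noncomputable def minWeight (E : V → V → Prop) (w : V → V → ℝ) : ℝ :=
  sInf {x : ℝ | ∃ i j, E i j ∧ x = w i j}

open Classical in
/-- Δ_nc(G), the maximum weight of an edge joining two non-critical nodes
(ρ(G) if there is no such edge). -/
noncomputable def maxNcWeight (E : V → V → Prop) (w : V → V → ℝ) : ℝ :=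
  if (∃ i j, E i j ∧ ¬ CriticalNode E w i ∧ ¬ CriticalNode E w j) then
    sSup {x : ℝ | ∃ i j, E i j ∧ ¬ CriticalNode E w i ∧ ¬ CriticalNode E w j ∧ x = w i j}
  else rate E w

/-- `d` is the greatest common divisor of the set `S` of naturals. -/
def IsGcdOf (d : ℕ) (S : Set ℕ) : Prop :=
  (∀ s ∈ S, d ∣ s) ∧ ∀ e : ℕ, (∀ s ∈ S, e ∣ s) → e ∣ d

/-- The set of lengths of nonempty closed walks in the graph. -/
def ClosedLengths (E : V → V → Prop) : Set ℕ :=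
  {n | 0 < n ∧ ∃ p, IsClosedWalk E n p}

/-- The set of lengths of nonempty closed walks starting at `i`. -/
def ClosedLengthsAt (E : V → V → Prop) (i : V) : Set ℕ :=
  {n | 0 < n ∧ ∃ p, IsWalk E n p ∧ p 0 = i ∧ p n = i}

/-- There is a (possibly empty) closed walk of length `n` starting at `i`. -/
def HasClosedWalkAt (E : V → V → Prop) (i : V) (n : ℕ) : Prop :=
  ∃ p, IsWalk E n p ∧ p 0 = i ∧ p n = i

/-- cd(G), the cab driver's diameter: the maximum length of simple walks. -/
noncomputable def cabDiameter (E : V → V → Prop) : ℕ :=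
  sSup {n | ∃ p, IsSimpleWalk E n p}

/-- cr(G), the circumference: the maximum length of nonempty elementary closed walks. -/
noncomputable def circumference (E : V → V → Prop) : ℕ :=
  sSup {n | ∃ p, IsElemClosedWalk E n p}

/-- `g` is the girth of the graph: the minimum length of nonempty elementary closed walks. -/
def IsGirth (E : V → V → Prop) (g : ℕ) : Prop :=
  IsLeast {n | ∃ p, IsElemClosedWalk E n p} g

/-- `ep` is the exploration penalty of a graph of cyclicity `c`: the least `m` such that
for every node `i` and every multiple `n` of `c` with `n ≥ m` there is a closed walk
of length `n` starting at `i`. -/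
def IsEp (E : V → V → Prop) (c ep : ℕ) : Prop :=
  IsLeast {m | ∀ i : V, ∀ n : ℕ, c ∣ n → m ≤ n → HasClosedWalkAt E i n} ep

/-- `i` and `j` lie in the same strongly connected component of the graph. -/
def SameComp (E : V → V → Prop) (i j : V) : Prop :=
  (∃ n p, IsWalk E n p ∧ p 0 = i ∧ p n = j) ∧ (∃ n p, IsWalk E n p ∧ p 0 = j ∧ p n = i)

/-- `m` is the exploration penalty of the strongly connected component of `k`
(a component of cyclicity `c`). -/
def IsCompEp (E : V → V → Prop) (k : V) (c m : ℕ) : Prop :=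
  IsLeast {m' | ∀ i : V, SameComp E k i → ∀ n : ℕ, c ∣ n → m' ≤ n → HasClosedWalkAt E i n} m

/-- Max-plus matrix product. -/
noncomputable def mpMul {N : ℕ} (A B : Matrix (Fin N) (Fin N) (WithBot ℝ)) :
    Matrix (Fin N) (Fin N) (WithBot ℝ) :=
  fun i j => Finset.univ.sup fun k => A i k + B k j

/-- Max-plus matrix power, `A^{⊗n}`. -/
noncomputable def mpPow {N : ℕ} (A : Matrix (Fin N) (Fin N) (WithBot ℝ)) :
    ℕ → Matrix (Fin N) (Fin N) (WithBot ℝ)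
  | 0 => fun i j => if i = j then (0 : WithBot ℝ) else ⊥
  | n + 1 => mpMul A (mpPow A n)

/-- Max-plus matrix-vector product. -/
noncomputable def mpVec {N : ℕ} (A : Matrix (Fin N) (Fin N) (WithBot ℝ))
    (v : Fin N → WithBot ℝ) : Fin N → WithBot ℝ :=
  fun i => Finset.univ.sup fun j => A i j + v j

/-- The edge relation of the weighted graph `G(A)`. -/
def mEdge {N : ℕ} (A : Matrix (Fin N) (Fin N) (WithBot ℝ)) : Fin N → Fin N → Prop :=
  fun i j => A i j ≠ ⊥

/-- The edge weights of the weighted graph `G(A)`. -/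
noncomputable def mWeight {N : ℕ} (A : Matrix (Fin N) (Fin N) (WithBot ℝ)) :
    Fin N → Fin N → ℝ :=
  fun i j => WithBot.unbotD 0 (A i j)

/-- `A` is irreducible: `G(A)` is strongly connected and has at least one edge. -/
def MPIrreducible {N : ℕ} (A : Matrix (Fin N) (Fin N) (WithBot ℝ)) : Prop :=
  StronglyConnected (mEdge A) ∧ NontrivialGraph (mEdge A)

/-- The linear max-plus system `x(n) = A^{⊗n} ⊗ v`. -/
noncomputable def mpSystem {N : ℕ} (A : Matrix (Fin N) (Fin N) (WithBot ℝ)) (v : Fin N → ℝ)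
    (n : ℕ) : Fin N → WithBot ℝ :=
  mpVec (mpPow A n) fun j => (v j : WithBot ℝ)

/-- The set of indices from which the system `x_{A,v}` is periodic with increment
`p·ρ(A)`; its least element is the transient `n_{A,v}`. -/
noncomputable def SysTransientSet {N : ℕ} (A : Matrix (Fin N) (Fin N) (WithBot ℝ))
    (v : Fin N → ℝ) : Set ℕ :=
  {n₀ | ∃ p : ℕ, 0 < p ∧ ∀ n, n₀ ≤ n → ∀ i,
    mpSystem A v (n + p) i
      = mpSystem A v n i + ((p * rate (mEdge A) (mWeight A) : ℝ) : WithBot ℝ)}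

/-- The set of indices from which the powers of `A` are periodic with increment
`p·ρ(A)`; its least element is the transient `n_A`. -/
noncomputable def MatTransientSet {N : ℕ} (A : Matrix (Fin N) (Fin N) (WithBot ℝ)) : Set ℕ :=
  {n₀ | ∃ p : ℕ, 0 < p ∧ ∀ n, n₀ ≤ n → ∀ i j,
    mpPow A (n + p) i j
      = mpPow A n i j + ((p * rate (mEdge A) (mWeight A) : ℝ) : WithBot ℝ)}

/-- `‖v‖ = max_i v_i − min_i v_i`. -/
noncomputable def vnorm {N : ℕ} (v : Fin N → ℝ) : ℝ :=
  sSup (Set.range v) - sInf (Set.range v)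


/-- The set of real differences `A^{⊗n}_{i,k} − A^{⊗n}_{i,j}` over all nodes `i,j,k`
and all `n ≥ B − 1` (stated as `B ≤ n + 1`) with `A^{⊗n}_{i,j} ≠ −∞` (the entries
with `A^{⊗n}_{i,k} = −∞` contribute `−∞` and are irrelevant for the supremum);
`μ(A)` is its supremum. -/
def muSet {N : ℕ} (A : Matrix (Fin N) (Fin N) (WithBot ℝ)) (B : ℕ) : Set ℝ :=
  {x : ℝ | ∃ (i j k : Fin N) (n : ℕ), B ≤ n + 1 ∧ ∃ a b : ℝ,
    mpPow A n i k = (a : WithBot ℝ) ∧ mpPow A n i j = (b : WithBot ℝ) ∧ x = a - b}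

section WalkLemmas

variable {E : V → V → Prop} {w : V → V → ℝ}

lemma isWalk_of_le {n m : ℕ} {p : ℕ → V} (h : IsWalk E n p) (hm : m ≤ n) : IsWalk E m p :=
  fun k hk => h k (lt_of_lt_of_le hk hm)

lemma isWalk_shift {n m : ℕ} {p : ℕ → V} (h : IsWalk E (n + m) p) :
    IsWalk E m (fun t => p (n + t)) := by
  intro k hk
  have := h (n + k) (by omega)
  have e : n + (k + 1) = n + k + 1 := by omega
  simpa [e] using this

lemma walkWeight_add (w : V → V → ℝ) (n m : ℕ) (p : ℕ → V) :
    walkWeight w (n + m) p = walkWeight w n p + walkWeight w m (fun t => p (n + t)) := by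
  unfold walkWeight
  rw [Finset.sum_range_add]
  congr 1

/-- Append two walks. -/
def wappend (m : ℕ) (p q : ℕ → V) : ℕ → V := fun t => if t ≤ m then p t else q (t - m)

lemma wappend_spec {m s : ℕ} {p q : ℕ → V} (hp : IsWalk E m p) (hq : IsWalk E s q)
    (hpq : p m = q 0) :
    IsWalk E (m + s) (wappend m p q) ∧ wappend m p q 0 = p 0 ∧
      wappend m p q (m + s) = q s ∧
      walkWeight w (m + s) (wappend m p q) = walkWeight w m p + walkWeight w s q := by
  have hval : ∀ t, t ≤ m → wappend m p q t = p t := fun t ht => by simp [wappend, ht]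
  have hval2 : ∀ t, wappend m p q (m + t) = q t := by
    intro t
    rcases Nat.eq_zero_or_pos t with rfl | ht
    · simpa [wappend] using hpq
    · have h1 : ¬ (m + t ≤ m) := by omega
      simp [wappend, h1]
  have hwalk : IsWalk E (m + s) (wappend m p q) := by
    intro k hk
    rcases lt_or_ge k m with hkm | hkm
    · rw [hval k (by omega), hval (k+1) (by omega)]
      exact hp k hkm
    · obtain ⟨t, rfl⟩ := Nat.exists_eq_add_of_le hkm
      have e : m + t + 1 = m + (t + 1) := by omega
      rw [e, hval2, hval2]
      exact hq t (by omega)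
  refine ⟨hwalk, hval 0 (by omega), hval2 s, ?_⟩
  rw [walkWeight_add w m s]
  congr 1
  · refine Finset.sum_congr rfl fun i hi => ?_
    have hi' : i < m := Finset.mem_range.mp hi
    rw [hval i (by omega), hval (i+1) (by omega)]
  · refine Finset.sum_congr rfl fun i _ => ?_
    show w (wappend m p q (m + i)) (wappend m p q (m + i + 1)) = w (q i) (q (i + 1))
    have e : m + i + 1 = m + (i + 1) := by omega
    rw [hval2, e, hval2]

/-- Prepend a node to a walk. -/
def wcons (i : V) (p : ℕ → V) : ℕ → V := fun t => if t = 0 then i else p (t - 1)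

lemma wcons_spec {i : V} {n : ℕ} {p : ℕ → V} (hij : E i (p 0)) (hp : IsWalk E n p) :
    IsWalk E (n + 1) (wcons i p) ∧ wcons i p 0 = i ∧ wcons i p (n + 1) = p n ∧
      walkWeight w (n + 1) (wcons i p) = w i (p 0) + walkWeight w n p := by
  have hval : ∀ t, wcons i p (t + 1) = p t := fun t => by simp [wcons]
  refine ⟨?_, rfl, hval n, ?_⟩
  · intro k hk
    rcases Nat.eq_zero_or_pos k with rfl | hk0
    · simpa [wcons] using hij
    · obtain ⟨t, rfl⟩ := Nat.exists_eq_add_of_le hk0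
      rw [Nat.add_comm 1 t, hval t, hval (t+1)]
      exact hp t (by omega)
  · unfold walkWeight
    rw [Finset.sum_range_succ' _ n]
    rw [add_comm]
    congr 1

/-- Rotation of a closed walk to start at any of its nodes. -/
lemma rotate_closed {n : ℕ} {p : ℕ → V} (hn : 0 < n) (hw : IsWalk E n p) (hc : p 0 = p n)
    {k : ℕ} (hk : k < n) :
    ∃ q, IsWalk E n q ∧ q 0 = p k ∧ q n = p k := by
  refine ⟨fun t => p ((k + t) % n), ?_, ?_, ?_⟩
  · intro t _
    show E (p ((k + t) % n)) (p ((k + (t + 1)) % n))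
    set s := (k + t) % n with hs
    have hsn : s < n := Nat.mod_lt _ hn
    have e1 : (k + (t + 1)) % n = (s + 1) % n := by
      have : k + (t + 1) = (k + t) + 1 := by omega
      rw [this, hs, Nat.mod_add_mod]
    rw [e1]
    rcases Nat.lt_or_ge (s + 1) n with h1 | h1
    · rw [Nat.mod_eq_of_lt h1]
      exact hw s hsn
    · have e2 : s + 1 = n := by omega
      rw [e2, Nat.mod_self]
      rw [hc, ← e2]
      exact hw s hsn
  · show p ((k + 0) % n) = p k
    rw [Nat.add_zero, Nat.mod_eq_of_lt hk]
  · show p ((k + n) % n) = p k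
    rw [Nat.add_mod_right, Nat.mod_eq_of_lt hk]

end WalkLemmas
section WalkLemmas2

variable {E : V → V → Prop} {w : V → V → ℝ}

/-- Every walk can be shortened to a simple walk with the same endpoints. -/
lemma exists_simple_walk : ∀ n (p : ℕ → V), IsWalk E n p → ∃ m q, IsWalk E m q ∧
    q 0 = p 0 ∧ q m = p n ∧ IsSimpleWalk E m q := by
  intro n
  induction n using Nat.strong_induction_on with
  | _ n IH =>
    intro p hp
    by_cases hrep : ∃ k l, k < l ∧ l ≤ n ∧ p k = p l
    · obtain ⟨k, l, hkl, hln, hpe⟩ := hrep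
      set e := n - l with he
      have h1 : IsWalk E k p := isWalk_of_le hp (by omega)
      have h2 : IsWalk E e (fun t => p (l + t)) := by
        have : IsWalk E (l + e) p := isWalk_of_le hp (by omega)
        exact isWalk_shift this
      have h3 : p k = (fun t => p (l + t)) 0 := by simpa using hpe
      obtain ⟨hw', h0', hn', -⟩ := wappend_spec (w := fun _ _ => (0:ℝ)) h1 h2 h3
      obtain ⟨m, q, hq, hq0, hqm, hsimp⟩ := IH (k + e) (by omega) _ hw'
      refine ⟨m, q, hq, by rw [hq0, h0'], ?_, hsimp⟩
      rw [hqm, hn']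
      show p (l + e) = p n
      congr 1
      omega
    · push_neg at hrep
      refine ⟨n, p, hp, rfl, rfl, hp, ?_⟩
      intro k l hk hl hkl
      by_contra hne
      rcases Nat.lt_or_ge k l with h | h
      · exact hrep k l h hl hkl
      · have h' : l < k := by omega
        exact hrep l k h' hk hkl.symm

lemma weight_bound {ρ Δ C : ℝ}
    (hmean : ∀ n (p : ℕ → V), 0 < n → IsClosedWalk E n p → walkWeight w n p ≤ ρ * n)
    (hΔ : ∀ i j, E i j → w i j ≤ Δ) (hρΔ : ρ ≤ Δ)
    (hcd : ∀ m (q : ℕ → V), IsSimpleWalk E m q → (m : ℝ) ≤ C) :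
    ∀ n (p : ℕ → V), IsWalk E n p → walkWeight w n p ≤ ρ * n + (Δ - ρ) * C := by
  intro n
  induction n using Nat.strong_induction_on with
  | _ n IH =>
    intro p hp
    by_cases hrep : ∃ k l, k < l ∧ l ≤ n ∧ p k = p l
    · obtain ⟨k, l, hkl, hln, hpe⟩ := hrep
      set d := l - k with hd
      set e := n - l with he
      have hn : n = k + d + e := by omega
      have h1 : IsWalk E k p := isWalk_of_le hp (by omega)
      have h2 : IsWalk E e (fun t => p (l + t)) := by
        have : IsWalk E (l + e) p := isWalk_of_le hp (by omega)
        exact isWalk_shift this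
      have h3 : p k = (fun t => p (l + t)) 0 := by simpa using hpe
      obtain ⟨hw', h0', hn', hweq⟩ := wappend_spec (w := w) h1 h2 h3
      -- the removed cycle: shift of p by k, length d
      have hcyc : IsClosedWalk E d (fun t => p (k + t)) := by
        constructor
        · have : IsWalk E (k + d) p := isWalk_of_le hp (by omega)
          exact isWalk_shift this
        · show p (k + 0) = p (k + d)
          rw [Nat.add_zero]
          rw [hpe]
          congr 1
          omega
      have hcycW : walkWeight w d (fun t => p (k + t)) ≤ ρ * d :=
        hmean d _ (by omega) hcyc
      -- decompose total weight
      have hdec : walkWeight w n p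
          = walkWeight w k p + walkWeight w d (fun t => p (k + t))
            + walkWeight w e (fun t => p (l + t)) := by
        have hkd : k + d = l := by omega
        have hshift : walkWeight w e (fun t => p (k + d + t))
            = walkWeight w e (fun t => p (l + t)) := by rw [hkd]
        conv_lhs => rw [hn]
        rw [walkWeight_add w (k + d) e, walkWeight_add w k d, hshift]
      have hIH := IH (k + e) (by omega) _ hw'
      rw [hweq] at hIH
      have hcast : (n : ℝ) = (k : ℝ) + d + e := by rw [hn]; push_cast; ring
      rw [hdec, hcast]
      push_cast at hIH ⊢
      linarith
    · push_neg at hrep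
      have hsimp : IsSimpleWalk E n p := by
        refine ⟨hp, ?_⟩
        intro k l hk hl hkl
        by_contra hne
        rcases Nat.lt_or_ge k l with h | h
        · exact hrep k l h hl hkl
        · exact hrep l k (by omega) hk hkl.symm
      have hnC : (n : ℝ) ≤ C := hcd n p hsimp
      have hW : walkWeight w n p ≤ Δ * n := by
        unfold walkWeight
        calc ∑ t ∈ Finset.range n, w (p t) (p (t + 1)) ≤ ∑ _t ∈ Finset.range n, Δ :=
              Finset.sum_le_sum fun t ht => hΔ _ _ (hp t (Finset.mem_range.mp ht))
          _ = Δ * n := by simp [mul_comm]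
      have h0 : 0 ≤ Δ - ρ := by linarith
      nlinarith
lemma weight_ge {δ : ℝ} (hδ : ∀ i j, E i j → δ ≤ w i j) {n : ℕ} {p : ℕ → V}
    (hp : IsWalk E n p) : δ * n ≤ walkWeight w n p := by
  unfold walkWeight
  calc δ * n = ∑ _t ∈ Finset.range n, δ := by simp [mul_comm]
    _ ≤ _ := Finset.sum_le_sum fun t ht => hδ _ _ (hp t (Finset.mem_range.mp ht))

end WalkLemmas2
section Bridge

variable {N : ℕ} {A : Matrix (Fin N) (Fin N) (WithBot ℝ)}

lemma mEdge_coe {i j : Fin N} (h : mEdge A i j) :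
    A i j = ((mWeight A i j : ℝ) : WithBot ℝ) := by
  unfold mEdge at h
  obtain ⟨x, hx⟩ := WithBot.ne_bot_iff_exists.mp h
  rw [← hx]
  unfold mWeight
  rw [← hx]
  rfl

lemma walk_le_mpPow : ∀ (n : ℕ) (p : ℕ → Fin N), IsWalk (mEdge A) n p →
    ((walkWeight (mWeight A) n p : ℝ) : WithBot ℝ) ≤ mpPow A n (p 0) (p n) := by
  intro n
  induction n with
  | zero =>
    intro p _
    simp [mpPow, walkWeight]
  | succ n IH =>
    intro p hp
    have htail : IsWalk (mEdge A) n (fun t => p (t + 1)) := by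
      intro k hk
      exact hp (k + 1) (by omega)
    have hIH := IH _ htail
    have hedge : mEdge A (p 0) (p 1) := hp 0 (by omega)
    have hW : walkWeight (mWeight A) (n + 1) p
        = mWeight A (p 0) (p 1) + walkWeight (mWeight A) n (fun t => p (t + 1)) := by
      unfold walkWeight
      rw [Finset.sum_range_succ' _ n, add_comm]
    show _ ≤ mpMul A (mpPow A n) (p 0) (p (n + 1))
    unfold mpMul
    have hle : A (p 0) (p 1) + mpPow A n (p 1) (p (n + 1))
        ≤ Finset.univ.sup fun k => A (p 0) k + mpPow A n k (p (n + 1)) :=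
      Finset.le_sup (f := fun k => A (p 0) k + mpPow A n k (p (n + 1))) (Finset.mem_univ (p 1))
    refine le_trans ?_ hle
    rw [hW, mEdge_coe hedge, WithBot.coe_add]
    gcongr

lemma mpPow_eq_coe : ∀ (n : ℕ) (i j : Fin N) (x : ℝ), mpPow A n i j = (x : WithBot ℝ) →
    ∃ p, IsWalk (mEdge A) n p ∧ p 0 = i ∧ p n = j ∧ walkWeight (mWeight A) n p = x := by
  intro n
  induction n with
  | zero =>
    intro i j x h
    by_cases hij : i = j
    · subst hij
      simp [mpPow] at h
      refine ⟨fun _ => i, by intro k hk; omega, rfl, rfl, ?_⟩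
      simp [walkWeight, ← h]
    · exfalso
      simp [mpPow, hij] at h
  | succ n IH =>
    intro i j x h
    have hN : (Finset.univ : Finset (Fin N)).Nonempty := ⟨i, Finset.mem_univ i⟩
    obtain ⟨k, -, hk⟩ := Finset.exists_mem_eq_sup Finset.univ hN
      fun k => A i k + mpPow A n k j
    have hk' : A i k + mpPow A n k j = (x : WithBot ℝ) := by
      rw [← hk]; exact h
    have hAik : A i k ≠ ⊥ := by
      intro hb; rw [hb] at hk'; simp at hk'
    have hPow : mpPow A n k j ≠ ⊥ := by
      intro hb; rw [hb] at hk'; simp at hk'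
    obtain ⟨a, ha⟩ := WithBot.ne_bot_iff_exists.mp hAik
    obtain ⟨y, hy⟩ := WithBot.ne_bot_iff_exists.mp hPow
    have hxy : a + y = x := by
      rw [← ha, ← hy] at hk'
      exact_mod_cast hk'
    obtain ⟨q, hq, hq0, hqn, hqw⟩ := IH k j y hy.symm
    have hedge : mEdge A i k := hAik
    have hik : mEdge A i (q 0) := by rw [hq0]; exact hedge
    obtain ⟨hw1, hw2, hw3, hw4⟩ := wcons_spec (w := mWeight A) hik hq
    refine ⟨wcons i q, hw1, hw2, by rw [hw3, hqn], ?_⟩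
    rw [hw4, hqw, hq0]
    have : mWeight A i k = a := by
      unfold mWeight; rw [← ha]; rfl
    rw [this, hxy]

lemma mpPow_ne_bot_of_walk {n : ℕ} {p : ℕ → Fin N} (hp : IsWalk (mEdge A) n p) :
    mpPow A n (p 0) (p n) ≠ ⊥ := by
  intro hb
  have := walk_le_mpPow n p hp
  rw [hb] at this
  simp at this

end Bridge
section RateFacts

variable [Fintype V] {E : V → V → Prop} {w : V → V → ℝ}

lemma weightSet_finite :
    {x : ℝ | ∃ i j, E i j ∧ x = w i j}.Finite := by
  apply Set.Finite.subset (Set.finite_range fun ij : V × V => w ij.1 ij.2)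
  rintro x ⟨i, j, -, rfl⟩
  exact ⟨(i, j), rfl⟩

lemma edge_le_maxWeight {i j : V} (h : E i j) : w i j ≤ maxWeight E w :=
  le_csSup (weightSet_finite.bddAbove) ⟨i, j, h, rfl⟩

lemma minWeight_le_edge {i j : V} (h : E i j) : minWeight E w ≤ w i j :=
  csInf_le (weightSet_finite.bddBelow) ⟨i, j, h, rfl⟩

/-- Elements of the rate set are at most `maxWeight`. -/
lemma rateSet_bddAbove (hne : NontrivialGraph E) :
    ∀ x ∈ {x : ℝ | ∃ n p, 0 < n ∧ IsClosedWalk E n p ∧ x = walkWeight w n p / n},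
      x ≤ maxWeight E w := by
  rintro x ⟨n, p, hn, ⟨hwalk, -⟩, rfl⟩
  rw [div_le_iff₀ (by positivity)]
  calc walkWeight w n p ≤ ∑ _t ∈ Finset.range n, maxWeight E w :=
        Finset.sum_le_sum fun t ht => edge_le_maxWeight (hwalk t (Finset.mem_range.mp ht))
    _ = maxWeight E w * n := by simp [mul_comm]

lemma closed_mean_le_rate (hne : NontrivialGraph E) {n : ℕ} {p : ℕ → V} (hn : 0 < n)
    (hp : IsClosedWalk E n p) : walkWeight w n p ≤ rate E w * n := by
  have hmem : walkWeight w n p / n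
      ∈ {x : ℝ | ∃ n p, 0 < n ∧ IsClosedWalk E n p ∧ x = walkWeight w n p / n} :=
    ⟨n, p, hn, hp, rfl⟩
  have := le_csSup ⟨maxWeight E w, fun x hx => rateSet_bddAbove hne x hx⟩ hmem
  rw [div_le_iff₀ (by positivity)] at this
  exact this

/-- A closed walk through every irreducible graph exists. -/
lemma exists_closed_walk (hSC : StronglyConnected E) (hne : NontrivialGraph E) :
    ∃ n p, 0 < n ∧ IsClosedWalk E n p := by
  obtain ⟨i0, j0, hij⟩ := hne
  obtain ⟨t, p, hp, hp0, hpt⟩ := hSC j0 i0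
  have hij0 : E i0 (p 0) := by rw [hp0]; exact hij
  obtain ⟨h1, h2, h3, -⟩ := wcons_spec (w := fun _ _ => (0:ℝ)) hij0 hp
  exact ⟨t + 1, wcons i0 p, by omega, h1, by rw [h2, h3, hpt]⟩

lemma rate_le_maxWeight (hSC : StronglyConnected E) (hne : NontrivialGraph E) :
    rate E w ≤ maxWeight E w := by
  apply csSup_le
  · obtain ⟨n, p, hn, hp⟩ := exists_closed_walk hSC hne
    exact ⟨_, n, p, hn, hp, rfl⟩
  · exact rateSet_bddAbove hne

lemma minWeight_le_rate (hSC : StronglyConnected E) (hne : NontrivialGraph E) :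
    minWeight E w ≤ rate E w := by
  obtain ⟨n, p, hn, hp⟩ := exists_closed_walk hSC hne
  have h1 : minWeight E w * n ≤ walkWeight w n p := weight_ge (fun i j h => minWeight_le_edge h) hp.1
  have h2 : walkWeight w n p / n
      ∈ {x : ℝ | ∃ n p, 0 < n ∧ IsClosedWalk E n p ∧ x = walkWeight w n p / n} :=
    ⟨n, p, hn, hp, rfl⟩
  have h3 := le_csSup ⟨maxWeight E w, fun x hx => rateSet_bddAbove hne x hx⟩ h2
  have h4 : minWeight E w ≤ walkWeight w n p / n := by
    rw [le_div_iff₀ (by positivity)]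
    exact h1
  exact le_trans h4 h3

lemma simple_le_cabDiameter {n : ℕ} {p : ℕ → V} (h : IsSimpleWalk E n p) :
    n ≤ cabDiameter E := by
  apply le_csSup
  · refine ⟨Fintype.card V, ?_⟩
    rintro m ⟨q, hq⟩
    have hinj : Function.Injective (fun t : Fin (m + 1) => q t) := by
      intro a b hab
      exact Fin.ext (hq.2 a b (by omega) (by omega) hab)
    have := Fintype.card_le_of_injective _ hinj
    simp at this
    omega
  · exact ⟨p, h⟩

end RateFacts
section Potential

variable [Fintype V] {E : V → V → Prop} {w : V → V → ℝ}

lemma CriticalEdge.toEdge {i j : V} (h : CriticalEdge E w i j) : E i j := by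
  obtain ⟨n, p, k, ⟨hn, ⟨hwalk, -⟩, -⟩, hk, hpk, hpk1⟩ := h
  rw [← hpk, ← hpk1]
  exact hwalk k hk

lemma exists_potential [Nonempty V] (hSC : StronglyConnected E) (hne : NontrivialGraph E) :
    ∃ π : V → ℝ, (∀ i j, E i j → w i j - rate E w ≤ π j - π i) ∧
      (∀ i j, CriticalEdge E w i j → w i j - rate E w = π j - π i) := by
  set ρ := rate E w with hρ
  have hbound : ∀ n (p : ℕ → V), IsWalk E n p →
      walkWeight w n p ≤ ρ * n + (maxWeight E w - ρ) * (cabDiameter E : ℝ) :=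
    weight_bound (fun n p hn hp => closed_mean_le_rate hne hn hp)
      (fun i j h => edge_le_maxWeight h) (rate_le_maxWeight hSC hne)
      (fun m q hq => by exact_mod_cast simple_le_cabDiameter hq)
  obtain ⟨v0⟩ := ‹Nonempty V›
  set S : V → Set ℝ := fun i =>
    {x | ∃ n p, IsWalk E n p ∧ p 0 = v0 ∧ p n = i ∧ x = walkWeight w n p - ρ * n} with hS
  have hSne : ∀ i, (S i).Nonempty := by
    intro i
    obtain ⟨n, p, hp, h0, hn⟩ := hSC v0 i
    exact ⟨_, n, p, hp, h0, hn, rfl⟩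
  have hSbdd : ∀ i, BddAbove (S i) := by
    intro i
    refine ⟨(maxWeight E w - ρ) * (cabDiameter E : ℝ), ?_⟩
    rintro x ⟨n, p, hp, -, -, rfl⟩
    have := hbound n p hp
    linarith
  set π : V → ℝ := fun i => sSup (S i) with hπ
  have hπ1 : ∀ i j, E i j → w i j - ρ ≤ π j - π i := by
    intro i j hij
    have hle : π i ≤ π j - (w i j - ρ) := by
      apply csSup_le (hSne i)
      rintro x ⟨n, p, hp, h0, hn, rfl⟩
      set q : ℕ → V := fun t => if t = 0 then i else j with hq
      have hq1 : IsWalk E 1 q := by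
        intro k hk
        have : k = 0 := by omega
        subst this
        simpa [hq] using hij
      have hpn : p n = q 0 := by simp [hq, hn]
      obtain ⟨h1, h2, h3, h4⟩ := wappend_spec (w := w) (isWalk_of_le hp le_rfl) hq1 hpn
      have hmem : walkWeight w n p + w i j - ρ * (n + 1) ∈ S j := by
        refine ⟨n + 1, wappend n p q, h1, by rw [h2, h0], by rw [h3]; simp [hq], ?_⟩
        rw [h4]
        have : walkWeight w 1 q = w i j := by
          unfold walkWeight
          simp [hq]
        rw [this]
        push_cast
        ring
      have := le_csSup (hSbdd j) hmem
      linarith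
    linarith
  refine ⟨π, hπ1, ?_⟩
  rintro i j ⟨n, p, k, ⟨hn, ⟨hwalk, hclosed⟩, hweight⟩, hk, hpk, hpk1⟩
  set f : ℕ → ℝ := fun t => w (p t) (p (t + 1)) - ρ with hf
  set g : ℕ → ℝ := fun t => π (p (t + 1)) - π (p t) with hg
  have hfg : ∀ t ∈ Finset.range n, f t ≤ g t := fun t ht =>
    hπ1 _ _ (hwalk t (Finset.mem_range.mp ht))
  have hsf : ∑ t ∈ Finset.range n, f t = 0 := by
    simp only [hf, Finset.sum_sub_distrib, Finset.sum_const, Finset.card_range, nsmul_eq_mul]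
    have : ∑ t ∈ Finset.range n, w (p t) (p (t + 1)) = walkWeight w n p := rfl
    rw [this, hweight, ← hρ]
    ring
  have hsg : ∑ t ∈ Finset.range n, g t = 0 := by
    simp only [hg]
    rw [Finset.sum_range_sub (fun t => π (p t)) n, ← hclosed, sub_self]
  have hall : ∀ t ∈ Finset.range n, f t = g t := by
    by_contra hcon
    push_neg at hcon
    obtain ⟨t0, ht0, hne0⟩ := hcon
    have hlt : ∑ t ∈ Finset.range n, f t < ∑ t ∈ Finset.range n, g t :=
      Finset.sum_lt_sum hfg ⟨t0, ht0, lt_of_le_of_ne (hfg t0 ht0) hne0⟩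
    rw [hsf, hsg] at hlt
    exact lt_irrefl 0 hlt
  have := hall k (Finset.mem_range.mpr hk)
  simpa [hf, hg, hpk, hpk1] using this

lemma crit_walk_weight {π : V → ℝ}
    (hπ2 : ∀ i j, CriticalEdge E w i j → w i j - rate E w = π j - π i)
    {m : ℕ} {q : ℕ → V} (hq : IsWalk (CriticalEdge E w) m q) (hc : q 0 = q m) :
    walkWeight w m q = rate E w * m := by
  have hcongr : ∀ t ∈ Finset.range m,
      w (q t) (q (t + 1)) = rate E w + (π (q (t + 1)) - π (q t)) := by
    intro t ht
    have := hπ2 _ _ (hq t (Finset.mem_range.mp ht))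
    linarith
  unfold walkWeight
  rw [Finset.sum_congr rfl hcongr, Finset.sum_add_distrib,
    Finset.sum_range_sub (fun t => π (q t)) m, ← hc]
  simp [Finset.sum_const, Finset.card_range, nsmul_eq_mul, mul_comm]

lemma criticalNode_closed {i : V} (hcn : CriticalNode E w i) :
    ∃ n q, 0 < n ∧ IsWalk (CriticalEdge E w) n q ∧ q 0 = i ∧ q n = i := by
  obtain ⟨n, p, k, hcrit, hk, hpk⟩ := hcn
  obtain ⟨hn, ⟨hwalk, hclosed⟩, hweight⟩ := hcrit
  have hcw : IsWalk (CriticalEdge E w) n p := fun t ht =>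
    ⟨n, p, t, ⟨hn, ⟨hwalk, hclosed⟩, hweight⟩, ht, rfl, rfl⟩
  rcases Nat.lt_or_ge k n with hk' | hk'
  · obtain ⟨q, h1, h2, h3⟩ := rotate_closed hn hcw hclosed hk'
    exact ⟨n, q, hn, h1, by rw [h2, hpk], by rw [h3, hpk]⟩
  · have hkn : k = n := by omega
    have h0 : p 0 = i := by rw [hclosed, ← hkn, hpk]
    exact ⟨n, p, hn, hcw, h0, by rw [← hclosed, h0]⟩

lemma walk_lengths_modeq (hSC : StronglyConnected E) {cG : ℕ}
    (hcG : IsGcdOf cG (ClosedLengths E)) {i j : V} {a b : ℕ}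
    (ha : ∃ p, IsWalk E a p ∧ p 0 = i ∧ p a = j)
    (hb : ∃ p, IsWalk E b p ∧ p 0 = i ∧ p b = j) : a ≡ b [MOD cG] := by
  obtain ⟨p, hp, hp0, hpa⟩ := ha
  obtain ⟨q, hq, hq0, hqb⟩ := hb
  obtain ⟨t, r, hr, hr0, hrt⟩ := hSC j i
  have key : ∀ (s : ℕ) (u : ℕ → V), IsWalk E s u → u 0 = i → u s = j → cG ∣ (s + t) := by
    intro s u hu hu0 hus
    rcases Nat.eq_zero_or_pos (s + t) with h0 | h0
    · rw [h0]
      exact dvd_zero cG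
    · have hjr : u s = r 0 := by rw [hus, hr0]
      obtain ⟨h1, h2, h3, -⟩ := wappend_spec (w := fun _ _ => (0:ℝ)) hu hr hjr
      refine hcG.1 (s + t) ⟨h0, wappend s u r, h1, ?_⟩
      rw [h2, h3, hu0, hrt]
  have h1 := (Nat.modEq_zero_iff_dvd).mpr (key a p hp hp0 hpa)
  have h2 := (Nat.modEq_zero_iff_dvd).mpr (key b q hq hq0 hqb)
  exact Nat.ModEq.add_right_cancel' t (h1.trans h2.symm)

end Potential
/-- With `B_ms(G) = 2·cd(G) + ep(G) + max_H c(H) + max_H ep(H) − 1`,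
every element of the set defining `μ(A)` is at most
`(Δ − ρ)·cd + (ρ − δ)·(2·cd + ep(G) + max_H c(H) − 1)`. -/
theorem stmt_17 {N : ℕ} (A : Matrix (Fin N) (Fin N) (WithBot ℝ)) (hA : MPIrreducible A)
    (cG epG : ℕ) (hcG : IsGcdOf cG (ClosedLengths (mEdge A)))
    (hepG : IsEp (mEdge A) cG epG)
    (dmax : ℕ)
    (hdmax : IsGreatest {c : ℕ | ∃ k : Fin N, CriticalNode (mEdge A) (mWeight A) k ∧
      IsGcdOf c (ClosedLengthsAt (CriticalEdge (mEdge A) (mWeight A)) k)} dmax)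
    (epmax : ℕ)
    (hepmax : IsGreatest {m : ℕ | ∃ (k : Fin N) (c : ℕ),
      CriticalNode (mEdge A) (mWeight A) k ∧
      IsGcdOf c (ClosedLengthsAt (CriticalEdge (mEdge A) (mWeight A)) k) ∧
      IsCompEp (CriticalEdge (mEdge A) (mWeight A)) k c m} epmax) :
    ∀ x ∈ muSet A (2 * cabDiameter (mEdge A) + epG + dmax + epmax),
      x ≤ (maxWeight (mEdge A) (mWeight A) - rate (mEdge A) (mWeight A)) *
            (cabDiameter (mEdge A) : ℝ) +
          (rate (mEdge A) (mWeight A) - minWeight (mEdge A) (mWeight A)) *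
            (2 * (cabDiameter (mEdge A) : ℝ) + (epG : ℝ) + (dmax : ℝ) - 1) := by
  obtain ⟨hSC, hne⟩ := hA
  rintro x ⟨i, j, k, n, hn, a, b, hak, hbj, rfl⟩
  have hNE : Nonempty (Fin N) := ⟨i⟩
  set E := mEdge A with hE
  set w := mWeight A with hw
  set ρ := rate E w with hρ
  set Δ := maxWeight E w with hΔ
  set δ := minWeight E w with hδ
  set cd := cabDiameter E with hcd
  -- basic order facts
  have hρΔ : ρ ≤ Δ := rate_le_maxWeight hSC hne
  have hδρ : δ ≤ ρ := minWeight_le_rate hSC hne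
  -- the global weight upper bound
  have hbound : ∀ n (p : ℕ → Fin N), IsWalk E n p →
      walkWeight w n p ≤ ρ * n + (Δ - ρ) * (cd : ℝ) :=
    weight_bound (fun n p hn hp => closed_mean_le_rate hne hn hp)
      (fun i j h => edge_le_maxWeight h) hρΔ
      (fun m q hq => by exact_mod_cast simple_le_cabDiameter hq)
  -- the potential
  obtain ⟨π, hπ1, hπ2⟩ := exists_potential (w := w) hSC hne
  -- the node with maximal component exploration penalty
  obtain ⟨k2, c2, hk2crit, hgcd2, hcompep⟩ := hepmax.1
  -- c2 is positive
  obtain ⟨n0, q0, hn0, hq0walk, hq00, hq0n⟩ := criticalNode_closed hk2crit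
  have hn0mem : n0 ∈ ClosedLengthsAt (CriticalEdge E w) k2 := ⟨hn0, q0, hq0walk, hq00, hq0n⟩
  have hc2dvd : c2 ∣ n0 := hgcd2.1 n0 hn0mem
  have hc2pos : 0 < c2 := by
    rcases Nat.eq_zero_or_pos c2 with h0 | h
    · exfalso
      rw [h0] at hc2dvd
      have := Nat.eq_zero_of_zero_dvd hc2dvd
      omega
    · exact h
  -- c2 ≤ dmax
  have hc2dmax : c2 ≤ dmax := hdmax.2 ⟨k2, hk2crit, hgcd2⟩
  have hdmax1 : 1 ≤ dmax := le_trans hc2pos hc2dmax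
  -- cG divides c2
  have hcGc2 : cG ∣ c2 := by
    apply hgcd2.2
    intro s hs
    obtain ⟨hs0, q, hq, h0, hsn⟩ := hs
    refine hcG.1 s ⟨hs0, q, fun t ht => (hq t ht).toEdge, ?_⟩
    rw [h0, hsn]
  -- simple walks i → k2 and k2 → j
  obtain ⟨n1, p1, hp1, hp10, hp1n⟩ := hSC i k2
  obtain ⟨l1, q1, hq1, hq10, hq1l, hq1simp⟩ := exists_simple_walk n1 p1 hp1
  rw [hp10] at hq10
  rw [hp1n] at hq1l
  have hl1 : l1 ≤ cd := simple_le_cabDiameter hq1simp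
  obtain ⟨n2, p2, hp2, hp20, hp2n⟩ := hSC k2 j
  obtain ⟨l2, q2, hq2, hq20, hq2l, hq2simp⟩ := exists_simple_walk n2 p2 hp2
  rw [hp20] at hq20
  rw [hp2n] at hq2l
  have hl2 : l2 ≤ cd := simple_le_cabDiameter hq2simp
  -- length arithmetic
  have hnbig : 2 * cd + epG + dmax + epmax ≤ n + 1 := hn
  have hl12n : l1 + l2 ≤ n := by omega
  set r := n - (l1 + l2) with hr
  have hrbig : epG + dmax + epmax ≤ r + 1 := by omega
  -- cG ∣ r
  have hwalkb : ∃ p, IsWalk E n p ∧ p 0 = i ∧ p n = j := by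
    obtain ⟨pb, h1, h2, h3, -⟩ := mpPow_eq_coe n i j b hbj
    exact ⟨pb, h1, h2, h3⟩
  have hq1l' : q1 l1 = q2 0 := by rw [hq1l, hq20]
  obtain ⟨hcw, hc0, hcl, -⟩ := wappend_spec (w := w) hq1 hq2 hq1l'
  have hwalk12 : ∃ p, IsWalk E (l1 + l2) p ∧ p 0 = i ∧ p (l1 + l2) = j := by
    refine ⟨wappend l1 q1 q2, hcw, by rw [hc0, hq10], by rw [hcl, hq2l]⟩
  have hmodeq : n ≡ l1 + l2 [MOD cG] := walk_lengths_modeq hSC hcG hwalkb hwalk12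
  have hcGr : cG ∣ r := (Nat.modEq_iff_dvd' hl12n).mp hmodeq.symm
  -- choose s and m
  have hepGr : epG ≤ r := by omega
  set s := epG + (r - epG) % c2 with hs
  have hsr : s ≤ r := by
    have := Nat.mod_le (r - epG) c2
    omega
  have hsle : s + 1 ≤ epG + c2 := by
    have := Nat.mod_lt (r - epG) hc2pos
    omega
  set m := r - s with hm
  have hc2m : c2 ∣ m := by
    have hdm := Nat.div_add_mod (r - epG) c2
    refine ⟨(r - epG) / c2, by omega⟩
  have hmepmax : epmax ≤ m := by omega
  have hcGs : cG ∣ s := by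
    have h1 : cG ∣ m := dvd_trans hcGc2 hc2m
    have : s = r - m := by omega
    rw [this]
    exact Nat.dvd_sub hcGr h1
  -- critical loop at k2 of length m
  have hsame : SameComp (CriticalEdge E w) k2 k2 :=
    ⟨⟨0, fun _ => k2, fun t ht => absurd ht (Nat.not_lt_zero t), rfl, rfl⟩,
     ⟨0, fun _ => k2, fun t ht => absurd ht (Nat.not_lt_zero t), rfl, rfl⟩⟩
  obtain ⟨qm, hqmwalk, hqm0, hqmm⟩ := hcompep.1 k2 hsame m hc2m hmepmax
  have hqmE : IsWalk E m qm := fun t ht => (hqmwalk t ht).toEdge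
  have hqmW : walkWeight w m qm = ρ * m :=
    crit_walk_weight hπ2 hqmwalk (by rw [hqm0, hqmm])
  -- plain loop at k2 of length s
  obtain ⟨qs, hqswalk, hqs0, hqss⟩ := hepG.1 k2 s hcGs (by omega)
  -- assemble the walk i → j of length n
  obtain ⟨h3w, h30, h3l, h3W⟩ := wappend_spec (E := E) (w := w) hqswalk hq2
    (by rw [hqss, hq20])
  obtain ⟨h2w, h20, h2l, h2W⟩ := wappend_spec (E := E) (w := w) hqmE h3w
    (by rw [hqmm, h30, hqs0])
  obtain ⟨h1w, h10, h1l, h1W⟩ := wappend_spec (E := E) (w := w) hq1 h2w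
    (by rw [hq1l, h20, hqm0])
  have hLn : l1 + (m + (s + l2)) = n := by omega
  rw [hLn] at h1w h1l
  set W := wappend l1 q1 (wappend m qm (wappend s qs q2)) with hWdef
  have hWweight : walkWeight w n W = walkWeight w l1 q1 + (walkWeight w m qm
      + (walkWeight w s qs + walkWeight w l2 q2)) := by
    rw [← hLn, h1W, h2W, h3W]
  -- lower bounds for segment weights
  have hδedge : ∀ i' j' : Fin N, E i' j' → δ ≤ w i' j' := fun i' j' h => minWeight_le_edge h
  have hW1 : δ * l1 ≤ walkWeight w l1 q1 := weight_ge hδedge hq1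
  have hW2 : δ * l2 ≤ walkWeight w l2 q2 := weight_ge hδedge hq2
  have hWs : δ * s ≤ walkWeight w s qs := weight_ge hδedge hqswalk
  -- b is at least the weight of W
  have hble : walkWeight w n W ≤ b := by
    have h := walk_le_mpPow n W h1w
    rw [h10, hq10] at h
    rw [h1l, h2l, h3l, hq2l] at h
    rw [hbj] at h
    exact_mod_cast h
  -- a is at most the walk bound
  have halea : a ≤ ρ * n + (Δ - ρ) * (cd : ℝ) := by
    obtain ⟨pa, hpa, hpa0, hpan, hpaW⟩ := mpPow_eq_coe n i k a hak
    rw [← hpaW]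
    exact hbound n pa hpa
  -- final arithmetic
  have hLsum : (n : ℝ) = (l1 : ℝ) + m + s + l2 := by
    rw [← hLn]
    push_cast
    ring
  have hKnat : l1 + s + l2 + 1 ≤ 2 * cd + epG + dmax := by omega
  have hK : (l1 : ℝ) + s + l2 ≤ 2 * (cd : ℝ) + epG + dmax - 1 := by
    have : ((l1 + s + l2 + 1 : ℕ) : ℝ) ≤ ((2 * cd + epG + dmax : ℕ) : ℝ) := by
      exact_mod_cast hKnat
    push_cast at this
    linarith
  have hmul : (ρ - δ) * ((l1 : ℝ) + s + l2) ≤ (ρ - δ) * (2 * (cd : ℝ) + epG + dmax - 1) :=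
    mul_le_mul_of_nonneg_left hK (by linarith)
  have hblow : δ * ((l1 : ℝ) + s + l2) + ρ * m ≤ b := by
    have : δ * ((l1 : ℝ) + s + l2) + ρ * m ≤ walkWeight w n W := by
      rw [hWweight, hqmW]
      push_cast
      nlinarith
    linarith
  have hρn : ρ * (n : ℝ) = ρ * (m : ℝ) + ρ * ((l1 : ℝ) + s + l2) := by
    rw [hLsum]
    ring
  have hexp2 : (ρ - δ) * ((l1 : ℝ) + s + l2)
      = ρ * ((l1 : ℝ) + s + l2) - δ * ((l1 : ℝ) + s + l2) := by ring
  linarith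

end Transients
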